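/- Let p be an odd prime, k ≥ 2 an integer, and s a finite multiset of complex p^k-th roots of unity. If the number of entries of s of multiplicative order exactly p^k (counted with multiplicity) is not divisible by p, or if the number of distinct entries of s of multiplicative order exactly p^k is not divisible by p, then the conductor of |s| equals p^k. -/

import Mathlib

open CategoryTheory

/-- `Qcyc N` is the `N`-th cyclotomic field `ℚ(ζ_N)`, realised as the subfield of `ℂ`
generated by all `N`-th roots of unity. -/
noncomputable def Qcyc (N : ℕ) : IntermediateField ℚ ℂ :=
  IntermediateField.adjoin ℚ {z : ℂ | z ^ N = 1}

/-- `Qadj c` is the subfield `ℚ(c)` of `ℂ` generated by a complex number `c`. -/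
noncomputable def Qadj (c : ℂ) : IntermediateField ℚ ℂ :=
  IntermediateField.adjoin ℚ {c}

/-- `f` is the conductor of the complex number `c`: the least positive integer `N`
with `c ∈ ℚ(ζ_N)`. -/
def IsConductorOf (c : ℂ) (f : ℕ) : Prop :=
  IsLeast {N : ℕ | 0 < N ∧ c ∈ Qcyc N} f

/-- `f` is the conductor of the character `χ`: the least positive integer `N` such that all
values of `χ` lie in `ℚ(ζ_N)`. -/
def IsCharConductor {G : Type*} [Monoid G] (χ : G → ℂ) (f : ℕ) : Prop :=
  IsLeast {N : ℕ | 0 < N ∧ ∀ g, χ g ∈ Qcyc N} f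

/-- Property 1.3 of Navarro–Tiep for `(G, χ, p)`: writing the conductor of `χ` as
`f = p ^ a * m` with `p ∤ m` (so that `p ^ a = p ^ (f.factorization p)` is the `p`-part of `f`),
there is a `p`-element `g ∈ G` such that `p ∤ [ℚ(ζ_{p^a}) : ℚ(χ(g))]`. -/
def Property13 {G : Type*} [Group G] (χ : G → ℂ) (p : ℕ) : Prop :=
  ∀ f : ℕ, IsCharConductor χ f →
    ∃ g : G, (∃ j : ℕ, orderOf g = p ^ j) ∧
      ¬ p ∣ (Qadj (χ g)).relfinrank (Qcyc (p ^ f.factorization p))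

open Polynomial Finset

lemma my_sum_range_mul {M : Type*} [AddCommMonoid M] (f : ℕ → M) (A B : ℕ) :
    ∑ x ∈ Finset.range (A * B), f x
      = ∑ i ∈ Finset.range A, ∑ j ∈ Finset.range B, f (i * B + j) := by
  induction A with
  | zero => simp
  | succ A ih =>
      rw [Nat.succ_mul, Finset.sum_range_add, ih, Finset.sum_range_succ]

/-- Key periodicity lemma: a vanishing ℕ-linear combination of `p^(t+1)`-th roots of
unity has multiplicity function constant on residue classes mod `p^t`. -/
lemma my_key {p : ℕ} (hp : p.Prime) (t : ℕ) {ζ : ℂ} (hζ : IsPrimitiveRoot ζ (p ^ (t + 1)))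
    (m : ℕ → ℕ) (hsum : ∑ a ∈ Finset.range (p ^ (t + 1)), (m a : ℂ) * ζ ^ a = 0) :
    ∀ j < p, ∀ b < p ^ t, m (j * p ^ t + b) = m b := by
  have hppos : 0 < p := hp.pos
  have hptpos : 0 < p ^ t := pow_pos hppos t
  set e := t + 1 with he
  -- the polynomial with coefficients m
  set f : ℚ[X] := ∑ a ∈ Finset.range (p ^ e), Polynomial.monomial a ((m a : ℚ)) with hf
  have hcoeff : ∀ a, f.coeff a = if a ∈ Finset.range (p ^ e) then (m a : ℚ) else 0 := by
    intro a
    rw [hf, Polynomial.finset_sum_coeff]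
    simp only [Polynomial.coeff_monomial]
    exact Finset.sum_ite_eq' (Finset.range (p ^ e)) a (fun b => (m b : ℚ))
  have haev : Polynomial.aeval ζ f = 0 := by
    rw [hf, map_sum]
    simpa [Polynomial.aeval_monomial] using hsum
  by_cases hf0 : f = 0
  · intro j hj b hb
    have h1 : (m (j * p ^ t + b) : ℚ) = 0 := by
      have := hcoeff (j * p ^ t + b)
      rw [hf0] at this
      simp only [Polynomial.coeff_zero] at this
      have hmem : j * p ^ t + b ∈ Finset.range (p ^ e) := by
        rw [Finset.mem_range, he, pow_succ]
        calc j * p ^ t + b < j * p ^ t + p ^ t := by omega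
        _ ≤ p ^ t * p := by nlinarith
      rw [if_pos hmem] at this
      exact this.symm
    have h2 : (m b : ℚ) = 0 := by
      have := hcoeff b
      rw [hf0] at this
      simp only [Polynomial.coeff_zero] at this
      have hmem : b ∈ Finset.range (p ^ e) := by
        rw [Finset.mem_range]
        exact lt_of_lt_of_le hb (Nat.pow_le_pow_right hppos (by omega))
      rw [if_pos hmem] at this
      exact this.symm
    exact_mod_cast h1.trans h2.symm
  -- f ≠ 0 case
  have hint : IsIntegral ℚ ζ :=
    ⟨X ^ (p ^ e) - C 1, Polynomial.monic_X_pow_sub_C (1 : ℚ) (pow_pos hppos e).ne',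
      by simp [hζ.pow_eq_one]⟩
  have hepos : 0 < p ^ e := pow_pos hppos e
  have hdvd : Polynomial.cyclotomic (p ^ e) ℚ ∣ f := by
    rw [Polynomial.cyclotomic_eq_minpoly_rat hζ hepos]
    exact minpoly.dvd ℚ ζ haev
  obtain ⟨h, hfh⟩ := hdvd
  have hh0 : h ≠ 0 := fun hc => hf0 (by rw [hfh, hc, mul_zero])
  have hcyc0 : Polynomial.cyclotomic (p ^ e) ℚ ≠ 0 := Polynomial.cyclotomic_ne_zero _ ℚ
  have hdegf : f.natDegree < p ^ e := by
    by_contra hcon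
    push_neg at hcon
    have := hcoeff f.natDegree
    rw [if_neg (by simpa using Nat.not_lt.mpr hcon)] at this
    exact hf0 (Polynomial.leadingCoeff_eq_zero.mp this)
  have hdegcyc : (Polynomial.cyclotomic (p ^ e) ℚ).natDegree = p ^ t * (p - 1) := by
    rw [Polynomial.natDegree_cyclotomic, he, Nat.totient_prime_pow hp (Nat.succ_pos t)]
    simp
  have hdegh : h.natDegree < p ^ t := by
    have hmul := Polynomial.natDegree_mul hcyc0 hh0
    rw [← hfh, hdegcyc] at hmul
    have key : p ^ t * (p - 1) + p ^ t = p ^ t * p := by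
      have hp1 : p - 1 + 1 = p := by omega
      calc p ^ t * (p - 1) + p ^ t = p ^ t * (p - 1 + 1) := by rw [Nat.mul_succ]
      _ = p ^ t * p := by rw [hp1]
    have hpe : p ^ e = p ^ t * (p - 1) + p ^ t := by
      rw [he, pow_succ, ← key]
    omega
  have hgeom : f = (∑ i ∈ Finset.range p, (X ^ p ^ t : ℚ[X]) ^ i) * h := by
    rw [hfh, he, Polynomial.cyclotomic_prime_pow_eq_geom_sum hp]
  have hkey : ∀ j < p, ∀ b < p ^ t, (m (j * p ^ t + b) : ℚ) = h.coeff b := by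
    intro j hj b hb
    have hmem : j * p ^ t + b < p ^ e := by
      rw [he, pow_succ]
      calc j * p ^ t + b < j * p ^ t + p ^ t := by omega
      _ = (j + 1) * p ^ t := by ring
      _ ≤ p * p ^ t := Nat.mul_le_mul_right _ (by omega)
      _ = p ^ t * p := by ring
    have h1 : f.coeff (j * p ^ t + b) = (m (j * p ^ t + b) : ℚ) := by
      rw [hcoeff, if_pos (Finset.mem_range.mpr hmem)]
    rw [← h1, hgeom, Finset.sum_mul, Polynomial.finset_sum_coeff]
    have hterm : ∀ i, (X ^ p ^ t : ℚ[X]) ^ i * h = h * X ^ (p ^ t * i) := by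
      intro i
      rw [← pow_mul, mul_comm]
    rw [Finset.sum_congr rfl fun i _ => by rw [hterm i, Polynomial.coeff_mul_X_pow']]
    rw [Finset.sum_eq_single j]
    · have hle : p ^ t * j ≤ j * p ^ t + b :=
        le_trans (le_of_eq (mul_comm _ _)) (Nat.le_add_right _ _)
      rw [if_pos hle, mul_comm (p ^ t) j, Nat.add_sub_cancel_left]
    · intro i hi hij
      rcases lt_or_gt_of_ne hij with hlt | hgt
      · have hle : p ^ t * i ≤ j * p ^ t + b := by
          calc p ^ t * i ≤ p ^ t * j := Nat.mul_le_mul_left _ (le_of_lt hlt)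
          _ = j * p ^ t := mul_comm _ _
          _ ≤ j * p ^ t + b := Nat.le_add_right _ _
        rw [if_pos hle]
        apply Polynomial.coeff_eq_zero_of_natDegree_lt
        have h2 : p ^ t * i + p ^ t ≤ j * p ^ t := by
          calc p ^ t * i + p ^ t = (i + 1) * p ^ t := by ring
          _ ≤ j * p ^ t := Nat.mul_le_mul_right _ (by omega)
        omega
      · have hneg : ¬ (p ^ t * i ≤ j * p ^ t + b) := by
          intro hc
          have h2 : (j + 1) * p ^ t ≤ i * p ^ t := Nat.mul_le_mul_right _ (by omega)
          have h3 : (j + 1) * p ^ t = j * p ^ t + p ^ t := by ring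
          have h4 : i * p ^ t = p ^ t * i := mul_comm _ _
          omega
        rw [if_neg hneg]
    · intro hj'
      exact absurd (Finset.mem_range.mpr hj) hj'
  intro j hj b hb
  have e1 := hkey j hj b hb
  have e2 := hkey 0 hppos b hb
  rw [zero_mul, zero_add] at e2
  exact_mod_cast e1.trans e2.symm

lemma my_periodic_sum {p t : ℕ} (m : ℕ → ℕ)
    (hper : ∀ j < p, ∀ b < p ^ t, m (j * p ^ t + b) = m b) :
    ∑ a ∈ Finset.range (p ^ (t + 1)), m a = p * ∑ b ∈ Finset.range (p ^ t), m b := by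
  rw [pow_succ, mul_comm (p ^ t) p, my_sum_range_mul]
  rw [Finset.sum_congr rfl fun j hj => Finset.sum_congr rfl fun b hb =>
    hper j (Finset.mem_range.mp hj) b (Finset.mem_range.mp hb)]
  rw [Finset.sum_const, smul_eq_mul, Finset.card_range]

lemma my_key_dvd_sum {p : ℕ} (hp : p.Prime) (t : ℕ) {ζ : ℂ}
    (hζ : IsPrimitiveRoot ζ (p ^ (t + 1))) (m : ℕ → ℕ)
    (hsum : ∑ a ∈ Finset.range (p ^ (t + 1)), (m a : ℂ) * ζ ^ a = 0) :
    p ∣ ∑ a ∈ Finset.range (p ^ (t + 1)), m a :=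
  ⟨_, my_periodic_sum m (my_key hp t hζ m hsum)⟩

lemma my_key_dvd_card {p : ℕ} (hp : p.Prime) (t : ℕ) {ζ : ℂ}
    (hζ : IsPrimitiveRoot ζ (p ^ (t + 1))) (m : ℕ → ℕ)
    (hsum : ∑ a ∈ Finset.range (p ^ (t + 1)), (m a : ℂ) * ζ ^ a = 0) :
    p ∣ ((Finset.range (p ^ (t + 1))).filter (fun a => m a ≠ 0)).card := by
  classical
  have hper := my_key hp t hζ m hsum
  have hper' : ∀ j < p, ∀ b < p ^ t,
      (fun a => if m a = 0 then 0 else 1) (j * p ^ t + b)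
        = (fun a => if m a = 0 then 0 else 1) b := by
    intro j hj b hb
    simp only [hper j hj b hb]
  rw [Finset.card_filter]
  have : ∀ a, (if m a ≠ 0 then 1 else 0) = (fun a => if m a = 0 then 0 else 1) a := by
    intro a
    by_cases h : m a = 0 <;> simp [h]
  rw [Finset.sum_congr rfl fun a _ => this a, my_periodic_sum _ hper']
  exact Dvd.intro _ rfl

open IntermediateField

lemma Qcyc_le_of_dvd {N M : ℕ} (h : N ∣ M) : Qcyc N ≤ Qcyc M := by
  apply IntermediateField.adjoin.mono
  rintro z hz
  obtain ⟨c, rfl⟩ := h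
  simp only [Set.mem_setOf_eq] at hz ⊢
  rw [pow_mul, hz, one_pow]

lemma Qcyc_eq_adjoin {m : ℕ} (hm : m ≠ 0) {ρ : ℂ} (hρ : IsPrimitiveRoot ρ m) :
    Qcyc m = ℚ⟮ρ⟯ := by
  haveI : NeZero m := ⟨hm⟩
  apply le_antisymm
  · rw [Qcyc, IntermediateField.adjoin_le_iff]
    rintro z hz
    obtain ⟨i, -, rfl⟩ := hρ.eq_pow_of_pow_eq_one hz
    exact pow_mem (IntermediateField.mem_adjoin_simple_self ℚ ρ) i
  · rw [IntermediateField.adjoin_le_iff]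
    rintro z rfl
    exact IntermediateField.subset_adjoin ℚ _ hρ.pow_eq_one

lemma Qcyc_isCyclotomicExtension {m : ℕ+} {ρ : ℂ} (hρ : IsPrimitiveRoot ρ (m : ℕ)) :
    IsCyclotomicExtension {(m : ℕ)} ℚ (Qcyc (m : ℕ)) := by
  haveI : NeZero (m : ℕ) := ⟨m.pos.ne'⟩
  have hint : IsIntegral ℚ ρ :=
    ⟨X ^ (m : ℕ) - C 1, Polynomial.monic_X_pow_sub_C (1 : ℚ) m.pos.ne',
      by simp [hρ.pow_eq_one]⟩
  have e : Qcyc (m : ℕ) = ℚ⟮ρ⟯ := Qcyc_eq_adjoin m.pos.ne' hρ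
  have H := IntermediateField.adjoin_simple_toSubalgebra_of_isAlgebraic hint.isAlgebraic
  have inst1 : IsCyclotomicExtension {(m : ℕ)} ℚ (ℚ⟮ρ⟯) := by
    refine IsCyclotomicExtension.equiv _ _ _ (h := ?_)
      (.refl : (ℚ⟮ρ⟯ : IntermediateField ℚ ℂ).toSubalgebra ≃ₐ[ℚ] _)
    rw [H]
    exact hρ.adjoin_isCyclotomicExtension ℚ
  exact IsCyclotomicExtension.equiv _ _ _ (h := inst1) (IntermediateField.equivOfEq e.symm)

lemma Qcyc_finrank {m : ℕ} (hm : 0 < m) :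
    Module.finrank ℚ (Qcyc m) = Nat.totient m := by
  have hρ : IsPrimitiveRoot (Complex.exp (2 * Real.pi * Complex.I / m)) m :=
    Complex.isPrimitiveRoot_exp m hm.ne'
  haveI : NeZero m := ⟨hm.ne'⟩
  haveI : IsCyclotomicExtension {m} ℚ (Qcyc m) :=
    Qcyc_isCyclotomicExtension (m := ⟨m, hm⟩) hρ
  exact IsCyclotomicExtension.finrank (n := m) (Qcyc m)
    (Polynomial.cyclotomic.irreducible_rat hm)

set_option maxHeartbeats 1000000 in
set_option synthInstance.maxHeartbeats 400000 in
lemma my_minpoly_deg {p n k' : ℕ} (hp : p.Prime) (hn : 0 < n) (hpn : ¬ p ∣ n)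
    {ζ : ℂ} (hζ : IsPrimitiveRoot ζ (p ^ (k' + 2) * n)) :
    (minpoly (Qcyc (p ^ (k' + 1) * n)) (ζ ^ n)).natDegree = p := by
  have hppos : 0 < p := hp.pos
  have hMpos : 0 < p ^ (k' + 2) * n := Nat.mul_pos (pow_pos hppos _) hn
  haveI : NeZero (p ^ (k' + 2) * n) := ⟨hMpos.ne'⟩
  have hM'pos : 0 < p ^ (k' + 1) * n := Nat.mul_pos (pow_pos hppos _) hn
  set K := Qcyc (p ^ (k' + 1) * n) with hK
  set L := Qcyc (p ^ (k' + 2) * n) with hL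
  set ξ := ζ ^ n with hξdef
  have hξ : IsPrimitiveRoot ξ (p ^ (k' + 2)) :=
    hζ.pow hMpos (mul_comm _ _)
  have hKL : K ≤ L :=
    Qcyc_le_of_dvd (mul_dvd_mul_right (pow_dvd_pow p (by omega)) n)
  have hζL : ζ ∈ L := IntermediateField.subset_adjoin ℚ _ hζ.pow_eq_one
  have hξL : ξ ∈ L := pow_mem hζL n
  have hintQ : IsIntegral ℚ ξ :=
    ⟨X ^ (p ^ (k' + 2)) - C 1,
      Polynomial.monic_X_pow_sub_C (1 : ℚ) (pow_pos hppos _).ne',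
      by simp [hξ.pow_eq_one]⟩
  have hint : IsIntegral K ξ := hintQ.tower_top
  have hζne : ζ ≠ 0 := hζ.ne_zero hMpos.ne'
  -- `restrictScalars` of `K⟮ξ⟯` is `L`
  have hres : IntermediateField.restrictScalars ℚ (IntermediateField.adjoin K {ξ}) = L := by
    refine (IntermediateField.restrictScalars_adjoin_eq_sup ℚ K {ξ}).trans ?_
    apply le_antisymm
    · exact sup_le hKL (IntermediateField.adjoin_le_iff.2 (by
        rintro z rfl
        exact hξL))
    · rw [hL, Qcyc, IntermediateField.adjoin_le_iff]
      rintro z hz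
      obtain ⟨i, -, rfl⟩ := hζ.eq_pow_of_pow_eq_one (k := p ^ (k' + 2) * n)
        (ξ := z) (by exact hz)
      apply pow_mem
      -- show ζ ∈ K ⊔ ℚ⟮ξ⟯
      have hcop : Nat.Coprime n (p ^ (k' + 2)) :=
        ((hp.coprime_iff_not_dvd.mpr hpn).symm).pow_right _
      have hbez : (n : ℤ) * Nat.gcdA n (p ^ (k' + 2))
          + (p ^ (k' + 2) : ℕ) * Nat.gcdB n (p ^ (k' + 2)) = 1 := by
        have := Nat.gcd_eq_gcd_ab n (p ^ (k' + 2))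
        rw [hcop] at this
        exact_mod_cast this.symm
      have hc : ζ ^ (p ^ (k' + 2)) ∈ K := by
        apply IntermediateField.subset_adjoin ℚ
        show (ζ ^ p ^ (k' + 2)) ^ (p ^ (k' + 1) * n) = 1
        rw [← pow_mul]
        have : p ^ (k' + 2) * (p ^ (k' + 1) * n) = (p ^ (k' + 2) * n) * p ^ (k' + 1) := by
          ring
        rw [this, pow_mul, hζ.pow_eq_one, one_pow]
      have hζmem : ζ ∈ K ⊔ IntermediateField.adjoin ℚ {ξ} := by
        have hξmem : ξ ∈ K ⊔ IntermediateField.adjoin ℚ {ξ} :=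
          le_sup_right (α := IntermediateField ℚ ℂ)
            (IntermediateField.subset_adjoin ℚ _ rfl)
        have hcmem : ζ ^ (p ^ (k' + 2)) ∈ K ⊔ IntermediateField.adjoin ℚ {ξ} :=
          le_sup_left (α := IntermediateField ℚ ℂ) hc
        have : ζ = ξ ^ (Nat.gcdA n (p ^ (k' + 2)))
            * (ζ ^ (p ^ (k' + 2))) ^ (Nat.gcdB n (p ^ (k' + 2))) := by
          rw [hξdef, ← zpow_natCast ζ n, ← zpow_natCast ζ (p ^ (k' + 2)),
            ← zpow_mul, ← zpow_mul, ← zpow_add₀ hζne, hbez, zpow_one]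
        rw [this]
        exact mul_mem (zpow_mem hξmem _) (zpow_mem hcmem _)
      exact hζmem
  -- finrank computations
  have hrkK : Module.finrank ℚ K = Nat.totient (p ^ (k' + 1) * n) := Qcyc_finrank hM'pos
  have hrkL : Module.finrank ℚ L = Nat.totient (p ^ (k' + 2) * n) := Qcyc_finrank hMpos
  have htot : Nat.totient (p ^ (k' + 2) * n) = p * Nat.totient (p ^ (k' + 1) * n) := by
    have hcop2 : Nat.Coprime (p ^ (k' + 2)) n := (hp.coprime_iff_not_dvd.mpr hpn).pow_left _
    have hcop1 : Nat.Coprime (p ^ (k' + 1)) n := (hp.coprime_iff_not_dvd.mpr hpn).pow_left _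
    rw [Nat.totient_mul hcop2, Nat.totient_mul hcop1,
      Nat.totient_prime_pow hp (Nat.succ_pos _), Nat.totient_prime_pow hp (Nat.succ_pos _)]
    have e1 : k' + 2 - 1 = k' + 1 := rfl
    have e2 : k' + 1 - 1 = k' := rfl
    rw [e1, e2, pow_succ]
    ring
  -- the ℚ-linear equivalence between K⟮ξ⟯ and L
  have hmemiff : ∀ z : ℂ, z ∈ IntermediateField.adjoin K {ξ} ↔ z ∈ L := by
    intro z
    rw [← hres, IntermediateField.mem_restrictScalars]
  let me : (IntermediateField.adjoin K {ξ}) ≃ₗ[ℚ] L :=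
    { toFun := fun x => ⟨x.1, (hmemiff x.1).mp x.2⟩
      invFun := fun y => ⟨y.1, (hmemiff y.1).mpr y.2⟩
      left_inv := fun x => rfl
      right_inv := fun y => rfl
      map_add' := fun x y => rfl
      map_smul' := fun q x => rfl }
  have hrkE : Module.finrank ℚ (IntermediateField.adjoin K {ξ}) = Module.finrank ℚ L :=
    me.finrank_eq
  have htower : Module.finrank ℚ K
      * Module.finrank K (IntermediateField.adjoin K {ξ}) = Module.finrank ℚ L := by
    rw [← hrkE]
    exact Module.finrank_mul_finrank ℚ K (IntermediateField.adjoin K {ξ})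
  have hfr : Module.finrank K (IntermediateField.adjoin K {ξ}) = p := by
    rw [hrkK, hrkL, htot] at htower
    have htpos : 0 < Nat.totient (p ^ (k' + 1) * n) := Nat.totient_pos.mpr hM'pos
    exact Nat.eq_of_mul_eq_mul_left htpos (by linarith)
  rw [← hfr]
  exact (IntermediateField.adjoin.finrank hint).symm

lemma my_filter_card_replicate (P : ℂ → Prop) [DecidablePred P] (n : ℕ) (x : ℂ) :
    ((Multiset.replicate n x).filter P).card = if P x then n else 0 := by
  induction n with
  | zero => simp
  | succ n ih =>
      rw [Multiset.replicate_succ, Multiset.filter_cons]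
      by_cases h : P x <;> simp [h, ih]

lemma my_mcard (P : ℂ → Prop) [DecidablePred P] (F : Finset ℕ) (m : ℕ → ℕ) (g : ℕ → ℂ) :
    ((∑ a ∈ F, m a • ({g a} : Multiset ℂ)).filter P).card
      = ∑ a ∈ F, if P (g a) then m a else 0 := by
  classical
  induction F using Finset.cons_induction with
  | empty => simp
  | cons a F ha ih =>
      rw [Finset.sum_cons, Finset.sum_cons, Multiset.filter_add, Multiset.card_add, ih,
        Multiset.nsmul_singleton, my_filter_card_replicate]

lemma my_msum (F : Finset ℕ) (m : ℕ → ℕ) (g : ℕ → ℂ) :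
    (∑ a ∈ F, m a • ({g a} : Multiset ℂ)).sum = ∑ a ∈ F, (m a : ℂ) * g a := by
  classical
  induction F using Finset.cons_induction with
  | empty => simp
  | cons a F ha ih =>
      rw [Finset.sum_cons, Finset.sum_cons, Multiset.sum_add, ih, Multiset.nsmul_singleton,
        Multiset.sum_replicate, nsmul_eq_mul]

set_option maxHeartbeats 2000000 in
set_option synthInstance.maxHeartbeats 400000 in
open scoped Classical in
/-- if the number of entries of `s` of order exactly `p^k` (with multiplicity),
or the number of distinct entries of `s` of order exactly `p^k`, is not divisible by `p`,
then the conductor of `|s|` is `p^k`. -/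
theorem stmt5 (p k : ℕ) (hp : p.Prime) (hodd : Odd p) (hk : 2 ≤ k)
    (s : Multiset ℂ) (hs : ∀ z ∈ s, z ^ p ^ k = 1)
    (hcard : ¬ p ∣ (s.filter (fun z => orderOf z = p ^ k)).card ∨
      ¬ p ∣ (s.toFinset.filter (fun z => orderOf z = p ^ k)).card) :
    IsConductorOf s.sum (p ^ k) := by
  obtain ⟨k', rfl⟩ : ∃ k', k = k' + 2 := ⟨k - 2, by omega⟩
  refine ⟨⟨pow_pos hp.pos _, ?_⟩, ?_⟩
  · apply IntermediateField.multiset_sum_mem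
    intro z hz
    exact IntermediateField.subset_adjoin ℚ _ (hs z hz)
  rintro N ⟨hN0, hNmem⟩
  -- it suffices to show `p ^ (k' + 2) ∣ N`
  suffices hdvdN : p ^ (k' + 2) ∣ N by exact Nat.le_of_dvd hN0 hdvdN
  by_contra hndvd
  -- the prime-to-p part of N
  set n := N / p ^ (N.factorization p) with hn
  have hordproj : p ^ (N.factorization p) ∣ N := Nat.ordProj_dvd N p
  have hj : N.factorization p ≤ k' + 1 := by
    by_contra h
    push_neg at h
    exact hndvd (dvd_trans (pow_dvd_pow p (by omega)) hordproj)
  have hn0 : 0 < n := Nat.ordCompl_pos p hN0.ne'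
  have hpn : ¬ p ∣ n := Nat.not_dvd_ordCompl hp hN0.ne'
  have hNn : N = p ^ (N.factorization p) * n := (Nat.ordProj_mul_ordCompl_eq_self N p).symm
  have hdvd : N ∣ p ^ (k' + 1) * n := by
    rw [hNn]
    exact mul_dvd_mul (pow_dvd_pow p hj) dvd_rfl
  have hαK : s.sum ∈ Qcyc (p ^ (k' + 1) * n) := Qcyc_le_of_dvd hdvd hNmem
  set K := Qcyc (p ^ (k' + 1) * n) with hKdef
  -- roots of unity set-up
  have hppos : 0 < p := hp.pos
  have hMpos : 0 < p ^ (k' + 2) * n := Nat.mul_pos (pow_pos hppos _) hn0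
  haveI : NeZero (p ^ (k' + 2)) := ⟨(pow_pos hppos _).ne'⟩
  obtain ⟨ζ, hζ⟩ : ∃ ζ : ℂ, IsPrimitiveRoot ζ (p ^ (k' + 2) * n) :=
    ⟨_, Complex.isPrimitiveRoot_exp _ hMpos.ne'⟩
  set ξ : ℂ := ζ ^ n with hξdef
  have hξ : IsPrimitiveRoot ξ (p ^ (k' + 2)) := hζ.pow hMpos (mul_comm _ _)
  set η : ℂ := ξ ^ p with hηdef
  have hη : IsPrimitiveRoot η (p ^ (k' + 1)) :=
    hξ.pow (pow_pos hppos _) (by rw [pow_succ, mul_comm])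
  have hηK : η ∈ K := by
    apply IntermediateField.subset_adjoin ℚ
    show η ^ (p ^ (k' + 1) * n) = 1
    rw [pow_mul, hη.pow_eq_one, one_pow]
  -- multiplicity function
  set m : ℕ → ℕ := fun a => s.count (ξ ^ a) with hmdef
  set F : Finset ℕ := Finset.range (p ^ (k' + 2)) with hFdef
  have hms : s = ∑ a ∈ F, m a • ({ξ ^ a} : Multiset ℂ) := by
    have hsub2 : s.toFinset ⊆ F.image (fun a => ξ ^ a) := by
      intro z hz
      obtain ⟨i, hi, rfl⟩ := hξ.eq_pow_of_pow_eq_one (hs z (Multiset.mem_toFinset.mp hz))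
      exact Finset.mem_image.mpr ⟨i, Finset.mem_range.mpr hi, rfl⟩
    have hinj : Set.InjOn (fun a => ξ ^ a) ↑F := by
      intro a ha b hb hab
      exact hξ.pow_inj (Finset.mem_range.mp ha) (Finset.mem_range.mp hb) hab
    calc s = ∑ y ∈ s.toFinset, s.count y • ({y} : Multiset ℂ) :=
        (Multiset.toFinset_sum_count_nsmul_eq s).symm
    _ = ∑ y ∈ F.image (fun a => ξ ^ a), s.count y • ({y} : Multiset ℂ) := by
        apply Finset.sum_subset hsub2
        intro y _ hy
        rw [Multiset.count_eq_zero_of_notMem (fun hc => hy (Multiset.mem_toFinset.mpr hc))]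
        simp
    _ = ∑ a ∈ F, m a • ({ξ ^ a} : Multiset ℂ) := Finset.sum_image hinj
  -- order characterisation
  have hordiff : ∀ a : ℕ, (orderOf (ξ ^ a) = p ^ (k' + 2)) ↔ ¬ p ∣ a := by
    intro a
    constructor
    · intro h hdvda
      have hprim : IsPrimitiveRoot (ξ ^ a) (p ^ (k' + 2)) := h ▸ IsPrimitiveRoot.orderOf (ξ ^ a)
      have hcop := (hξ.pow_iff_coprime (pow_pos hppos _) a).mp hprim
      rw [Nat.coprime_pow_right_iff (by omega)] at hcop
      exact (hp.coprime_iff_not_dvd.mp hcop.symm) hdvda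
    · intro hnd
      have hcop : a.Coprime (p ^ (k' + 2)) :=
        Nat.Coprime.pow_right _ ((hp.coprime_iff_not_dvd.mpr hnd).symm)
      exact ((hξ.pow_iff_coprime (pow_pos hppos _) a).mpr hcop).eq_orderOf.symm
  -- dvd characterisation for two-variable indices
  have hdvd2 : ∀ q r : ℕ, r < p → (p ∣ q * p + r ↔ r = 0) := by
    intro q r hr
    constructor
    · intro h
      have h2 : p ∣ r := (Nat.dvd_add_right (Dvd.intro_left q rfl)).mp h
      exact Nat.eq_zero_of_dvd_of_lt h2 hr
    · rintro rfl
      simpa using Dvd.intro_left q rfl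
  -- the coefficients c r
  set c : ℕ → ℂ := fun r => ∑ q ∈ Finset.range (p ^ (k' + 1)), (m (q * p + r) : ℂ) * η ^ q
    with hcdef
  have hξpow : ∀ q r : ℕ, ξ ^ (q * p + r) = η ^ q * ξ ^ r := by
    intro q r
    rw [pow_add, hηdef, ← pow_mul ξ p q, mul_comm p q]
  have hα : s.sum = ∑ r ∈ Finset.range p, c r * ξ ^ r := by
    have h1 : s.sum = ∑ a ∈ F, (m a : ℂ) * ξ ^ a := by
      conv_lhs => rw [hms]
      exact my_msum F m (fun a => ξ ^ a)
    rw [h1, hFdef, show p ^ (k' + 2) = p ^ (k' + 1) * p from pow_succ p (k' + 1),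
      my_sum_range_mul, Finset.sum_comm]
    apply Finset.sum_congr rfl
    intro r _
    simp only [hcdef]
    rw [Finset.sum_mul]
    apply Finset.sum_congr rfl
    intro q _
    rw [hξpow q r]
    ring
  have hcK : ∀ r, c r ∈ K := by
    intro r
    apply sum_mem
    intro q _
    apply mul_mem _ (pow_mem hηK q)
    have h2 := K.algebraMap_mem ((m (q * p + r) : ℚ))
    simpa using h2
  have hminp : (minpoly K ξ).natDegree = p := by
    rw [hKdef, hξdef]
    exact my_minpoly_deg hp hn0 hpn hζ
  have hintQ : IsIntegral ℚ ξ :=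
    ⟨X ^ (p ^ (k' + 2)) - C 1, Polynomial.monic_X_pow_sub_C (1 : ℚ) (pow_pos hppos _).ne',
      by simp [hξ.pow_eq_one]⟩
  have hint : IsIntegral K ξ := hintQ.tower_top
  have hcr : ∀ r, 0 < r → r < p → c r = 0 := by
    intro r hr0 hrp
    set Pol : Polynomial K :=
      (∑ i ∈ Finset.range p, Polynomial.C (⟨c i, hcK i⟩ : K) * Polynomial.X ^ i)
        - Polynomial.C (⟨s.sum, hαK⟩ : K) with hPol
    have haev : Polynomial.aeval ξ Pol = 0 := by
      rw [hPol, map_sub, map_sum]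
      simp only [map_mul, Polynomial.aeval_C, Polynomial.aeval_X_pow]
      rw [sub_eq_zero]
      show ∑ i ∈ Finset.range p, c i * ξ ^ i = s.sum
      exact hα.symm
    have hPolne : Pol = 0 := by
      by_contra hne
      have hd := minpoly.degree_le_of_ne_zero (A := ↥K) (x := ξ) hne haev
      have hdeg : Pol.natDegree ≤ p - 1 := by
        rw [hPol]
        apply le_trans (Polynomial.natDegree_sub_le _ _)
        apply max_le
        · apply Polynomial.natDegree_sum_le_of_forall_le
          intro i hi
          apply le_trans (Polynomial.natDegree_mul_le)
          rw [Polynomial.natDegree_C, Polynomial.natDegree_X_pow]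
          have := Finset.mem_range.mp hi
          omega
        · rw [Polynomial.natDegree_C]
          omega
      have h1 : (minpoly K ξ).degree ≤ ((p - 1 : ℕ) : WithBot ℕ) := by
        refine le_trans hd (le_trans Polynomial.degree_le_natDegree ?_)
        exact_mod_cast Nat.cast_le.mpr hdeg
      rw [Polynomial.degree_eq_natDegree (minpoly.ne_zero hint), hminp] at h1
      have h2 : p ≤ p - 1 := by exact_mod_cast h1
      omega
    have h3 : Pol.coeff r = (⟨c r, hcK r⟩ : K) := by
      rw [hPol, Polynomial.coeff_sub, Polynomial.coeff_C, if_neg (by omega : ¬ r = 0), sub_zero,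
        Polynomial.finset_sum_coeff]
      rw [Finset.sum_congr rfl (fun i _ => by
        rw [Polynomial.coeff_C_mul, Polynomial.coeff_X_pow, mul_ite, mul_one, mul_zero])]
      rw [Finset.sum_ite_eq, if_pos (Finset.mem_range.mpr hrp)]
    have h4 : (⟨c r, hcK r⟩ : K) = 0 := by rw [← h3, hPolne, Polynomial.coeff_zero]
    exact congrArg Subtype.val h4
  -- divisibility of the multiplicity count
  have hA : p ∣ (s.filter (fun z => orderOf z = p ^ (k' + 2))).card := by
    have h1 : (s.filter (fun z => orderOf z = p ^ (k' + 2))).card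
        = ∑ a ∈ F, if orderOf (ξ ^ a) = p ^ (k' + 2) then m a else 0 := by
      conv_lhs => rw [hms]
      exact my_mcard _ F m _
    have h2 : (∑ a ∈ F, if orderOf (ξ ^ a) = p ^ (k' + 2) then m a else 0)
        = ∑ r ∈ Finset.range p, ∑ q ∈ Finset.range (p ^ (k' + 1)),
            (if orderOf (ξ ^ (q * p + r)) = p ^ (k' + 2) then m (q * p + r) else 0) := by
      rw [hFdef, show p ^ (k' + 2) = p ^ (k' + 1) * p from pow_succ p (k' + 1),
        my_sum_range_mul]
      exact Finset.sum_comm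
    rw [h1, h2]
    apply Finset.dvd_sum
    intro r hr
    have hrp : r < p := Finset.mem_range.mp hr
    by_cases hr0 : r = 0
    · subst hr0
      have hz : ∀ q ∈ Finset.range (p ^ (k' + 1)),
          (if orderOf (ξ ^ (q * p + 0)) = p ^ (k' + 2) then m (q * p + 0) else 0) = 0 :=
        fun q _ => if_neg (fun hcon => ((hordiff _).mp hcon) ((hdvd2 q 0 hppos).mpr rfl))
      rw [Finset.sum_eq_zero hz]
      exact dvd_zero p
    · have hv : ∀ q ∈ Finset.range (p ^ (k' + 1)),
          (if orderOf (ξ ^ (q * p + r)) = p ^ (k' + 2) then m (q * p + r) else 0)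
            = m (q * p + r) :=
        fun q _ => if_pos ((hordiff _).mpr (fun hcon => hr0 ((hdvd2 q r hrp).mp hcon)))
      rw [Finset.sum_congr rfl hv]
      apply my_key_dvd_sum hp k' hη (fun q => m (q * p + r))
      have := hcr r (by omega) hrp
      simpa only [hcdef] using this
  -- divisibility of the distinct count
  have hB : p ∣ (s.toFinset.filter (fun z => orderOf z = p ^ (k' + 2))).card := by
    have hmem : ∀ z : ℂ, z ∈ s ↔ ∃ a, a ∈ F ∧ m a ≠ 0 ∧ z = ξ ^ a := by
      intro z
      conv_lhs => rw [hms]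
      simp only [Multiset.mem_sum, Multiset.mem_nsmul, Multiset.mem_singleton]
    have himg : s.toFinset.filter (fun z => orderOf z = p ^ (k' + 2))
        = (F.filter (fun a => m a ≠ 0 ∧ orderOf (ξ ^ a) = p ^ (k' + 2))).image
            (fun a => ξ ^ a) := by
      ext z
      simp only [Finset.mem_filter, Multiset.mem_toFinset, Finset.mem_image, hmem z]
      constructor
      · rintro ⟨⟨a, haF, hma, rfl⟩, hord⟩
        exact ⟨a, ⟨haF, hma, hord⟩, rfl⟩
      · rintro ⟨a, ⟨haF, hma, hord⟩, rfl⟩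
        exact ⟨⟨a, haF, hma, rfl⟩, hord⟩
    rw [himg, Finset.card_image_of_injOn (fun a ha b hb hab =>
      hξ.pow_inj (Finset.mem_range.mp (Finset.mem_filter.mp ha).1)
        (Finset.mem_range.mp (Finset.mem_filter.mp hb).1) hab)]
    rw [Finset.card_filter]
    have h2 : (∑ a ∈ F, if m a ≠ 0 ∧ orderOf (ξ ^ a) = p ^ (k' + 2) then 1 else 0)
        = ∑ r ∈ Finset.range p, ∑ q ∈ Finset.range (p ^ (k' + 1)),
            (if m (q * p + r) ≠ 0 ∧ orderOf (ξ ^ (q * p + r)) = p ^ (k' + 2) then 1 else 0) := by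
      rw [hFdef, show p ^ (k' + 2) = p ^ (k' + 1) * p from pow_succ p (k' + 1),
        my_sum_range_mul]
      exact Finset.sum_comm
    rw [h2]
    apply Finset.dvd_sum
    intro r hr
    have hrp : r < p := Finset.mem_range.mp hr
    by_cases hr0 : r = 0
    · subst hr0
      have hz : ∀ q ∈ Finset.range (p ^ (k' + 1)),
          (if m (q * p + 0) ≠ 0 ∧ orderOf (ξ ^ (q * p + 0)) = p ^ (k' + 2) then 1 else 0) = 0 :=
        fun q _ => if_neg (fun hcon => ((hordiff _).mp hcon.2) ((hdvd2 q 0 hppos).mpr rfl))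
      rw [Finset.sum_eq_zero hz]
      exact dvd_zero p
    · have hord : ∀ q : ℕ, orderOf (ξ ^ (q * p + r)) = p ^ (k' + 2) :=
        fun q => (hordiff _).mpr (fun hcon => hr0 ((hdvd2 q r hrp).mp hcon))
      have hv : ∀ q ∈ Finset.range (p ^ (k' + 1)),
          (if m (q * p + r) ≠ 0 ∧ orderOf (ξ ^ (q * p + r)) = p ^ (k' + 2) then 1 else 0)
            = (if m (q * p + r) ≠ 0 then 1 else 0) := by
        intro q _
        by_cases hm : m (q * p + r) = 0
        · rw [if_neg (fun hcon => hcon.1 hm), if_neg (fun h => h hm)]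
        · rw [if_pos ⟨hm, hord q⟩, if_pos hm]
      rw [Finset.sum_congr rfl hv]
      have hdc := my_key_dvd_card hp k' hη (fun q => m (q * p + r)) (by
        have := hcr r (by omega) hrp
        simpa only [hcdef] using this)
      rwa [Finset.card_filter] at hdc
  rcases hcard with h | h
  · exact h hA
  · exact h hB
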